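/- Let n ≥ 1, w̄ ≥ 1, k_A ≥ 1, k_B ≥ 1, ℓ ≥ 1 with Δ_A = n·w̄ = k_A·ℓ, p = k_B·w̄, and k_A·k_B ≤ n. For 0 ≤ i < Δ_A let U_i = {j ∈ {0,…,n−1} : (i − j·w̄) mod Δ_A < p}. Then for any distinct i₁, i₂ ∈ {0,…,Δ_A−1} with i₁ ≡ i₂ (mod ℓ) one has U_{i₁} ∩ U_{i₂} = ∅; consequently, for every m with 0 ≤ m < ℓ, |⋃_{t=0}^{k_A−1} U_{m+tℓ}| = k_A·k_B. -/

import Mathlib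

private lemma stmt11_mod_mul_decomp (n w a s : ℕ) (hn : 0 < n) (hw : 0 < w) (hs : s < w) :
    (a * w + s) % (n * w) = (a % n) * w + s := by
  have h := Nat.div_add_mod a n
  have heq : a * w + s = (a % n * w + s) + (a / n) * (n * w) := by
    have h8 : (n * (a / n) + a % n) * w = a * w := by rw [h]
    have h10 : (n * (a / n) + a % n) * w = n * (a / n) * w + a % n * w := by ring
    have h11 : (a / n) * (n * w) = n * (a / n) * w := by ring
    linarith
  rw [heq, Nat.add_mul_mod_self_right]
  apply Nat.mod_eq_of_lt
  have h2 : a % n < n := Nat.mod_lt _ hn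
  nlinarith

private lemma stmt11_threshold (w kB r s : ℕ) (hs : s < w) :
    r * w + s < kB * w ↔ r < kB := by
  constructor
  · intro h; by_contra hc; push_neg at hc
    nlinarith [Nat.mul_le_mul_right w hc]
  · intro h
    nlinarith [Nat.mul_le_mul_right w (Nat.succ_le_of_lt h)]

private lemma stmt11_cond_iff (n w kB q s i j : ℕ) (hn : 0 < n) (hs : s < w)
    (hi : i = q * w + s) (hj : j < n) :
    ((i : ℤ) - (j : ℤ) * (w : ℤ)) % ((n : ℤ) * (w : ℤ)) < (kB : ℤ) * (w : ℤ) ↔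
      (q + n - j) % n < kB := by
  have hw : 0 < w := by omega
  have h9 : (q + n - j) * w + s + j * w = i + n * w := by
    have h8 : (q + n - j) * w + j * w = (q + n) * w := by
      rw [← Nat.add_mul]; congr 1; omega
    have h10 : (q + n) * w = q * w + n * w := Nat.add_mul _ _ _
    linarith [hi.symm.le]
  have hnum : (((q + n - j) * w + s : ℕ) : ℤ) = ((i : ℤ) - j * w) + (n : ℤ) * w := by
    have h12 := congrArg (Nat.cast : ℕ → ℤ) h9
    push_cast at h12 ⊢
    linarith
  have hmod1 : ((i : ℤ) - j * w) % ((n : ℤ) * w)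
      = (((q + n - j) * w + s : ℕ) : ℤ) % ((n : ℤ) * w) := by
    rw [hnum]
    have h13 := Int.add_mul_emod_self_left (a := (i : ℤ) - j * w) (b := (n : ℤ) * w) (c := 1)
    simpa using h13.symm
  have hmod2 : (((q + n - j) * w + s : ℕ) : ℤ) % ((n : ℤ) * w)
      = ((((q + n - j) % n) * w + s : ℕ) : ℤ) := by
    have h13 := congrArg (Nat.cast : ℕ → ℤ) (stmt11_mod_mul_decomp n w (q + n - j) s hn hw hs)
    push_cast at h13 ⊢
    convert h13 using 2
  rw [hmod1, hmod2]
  have h14 : ((kB : ℤ) * w) = (((kB * w) : ℕ) : ℤ) := by push_cast; ring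
  rw [h14, Nat.cast_lt]
  exact stmt11_threshold w kB _ s hs

private lemma stmt11_card_filter (n q kB : ℕ) (hn : 0 < n) (hkB : kB ≤ n) :
    ((Finset.range n).filter (fun j => (q + n - j) % n < kB)).card = kB := by
  have hinv : ∀ j < n, (q + n - ((q + n - j) % n)) % n = j := by
    intro j hj
    have h1 := Nat.div_add_mod (q + n - j) n
    set M := n * ((q + n - j) / n) with hM
    have hr : (q + n - j) % n < n := Nat.mod_lt _ hn
    have h2 : q + n - (q + n - j) % n = j + M := by omega
    rw [h2, hM, Nat.mul_comm, Nat.add_mul_mod_self_right, Nat.mod_eq_of_lt hj]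
  have htgt : (Finset.range n).filter (fun x => x < kB) = Finset.range kB := by
    ext x; simp only [Finset.mem_filter, Finset.mem_range]; omega
  have hcard : ((Finset.range n).filter (fun j => (q + n - j) % n < kB)).card
      = ((Finset.range n).filter (fun x => x < kB)).card := by
    apply Finset.card_bij' (i := fun j _ => (q + n - j) % n) (j := fun x _ => (q + n - x) % n)
    · intro a ha
      simp only [Finset.mem_filter, Finset.mem_range] at ha ⊢
      exact ⟨Nat.mod_lt _ hn, ha.2⟩
    · intro a ha
      simp only [Finset.mem_filter, Finset.mem_range] at ha ⊢
      exact ⟨Nat.mod_lt _ hn, by rw [hinv a ha.1]; exact ha.2⟩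
    · intro a ha
      simp only [Finset.mem_filter, Finset.mem_range] at ha
      exact hinv a ha.1
    · intro a ha
      simp only [Finset.mem_filter, Finset.mem_range] at ha
      exact hinv a ha.1
  rw [hcard, htgt, Finset.card_range]

theorem stmt11 (n w kA kB ℓ ΔA p : ℕ)
    (hn : 1 ≤ n) (hw : 1 ≤ w) (hkA : 1 ≤ kA) (hkB : 1 ≤ kB) (hl : 1 ≤ ℓ)
    (hΔ1 : ΔA = n * w) (hΔ2 : ΔA = kA * ℓ) (hp : p = kB * w) (hkk : kA * kB ≤ n)
    (U : ℕ → Finset ℕ)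
    (hU : ∀ i, U i = (Finset.range n).filter
      (fun (j : ℕ) => ((i : ℤ) - (j : ℤ) * (w : ℤ)) % (ΔA : ℤ) < (p : ℤ))) :
    (∀ i₁ i₂, i₁ < ΔA → i₂ < ΔA → i₁ ≠ i₂ → i₁ % ℓ = i₂ % ℓ →
      U i₁ ∩ U i₂ = ∅) ∧
    ∀ m < ℓ, ((Finset.range kA).biUnion (fun t => U (m + t * ℓ))).card = kA * kB := by
  have hn' : 0 < n := hn
  have hw' : 0 < w := hw
  have hkBn : kB ≤ n := le_trans (Nat.le_mul_of_pos_left kB hkA) hkk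
  have hΔ0 : 0 < ΔA := by rw [hΔ1]; positivity
  have hD0 : (0 : ℤ) < (ΔA : ℤ) := by exact_mod_cast hΔ0
  have key : ∀ (M a b : ℤ), M ∣ a - b ↔ a % M = b % M := by
    intro M a b
    rw [Int.dvd_iff_emod_eq_zero]
    exact Int.emod_eq_emod_iff_emod_sub_eq_zero.symm
  have hpl : (p : ℤ) ≤ (ℓ : ℤ) := by
    have h1 : kA * p ≤ kA * ℓ := by
      calc kA * p = kA * kB * w := by rw [hp]; ring
        _ ≤ n * w := Nat.mul_le_mul_right _ hkk
        _ = kA * ℓ := by rw [← hΔ1, hΔ2]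
    exact_mod_cast Nat.le_of_mul_le_mul_left h1 hkA
  -- Part 1: disjointness
  have hdisj : ∀ i₁ i₂, i₁ < ΔA → i₂ < ΔA → i₁ ≠ i₂ → i₁ % ℓ = i₂ % ℓ →
      U i₁ ∩ U i₂ = ∅ := by
    intro i₁ i₂ h₁ h₂ hne hmod
    rw [Finset.eq_empty_iff_forall_notMem]
    intro j hj
    rw [hU i₁, hU i₂] at hj
    simp only [Finset.mem_inter, Finset.mem_filter, Finset.mem_range] at hj
    obtain ⟨⟨hjn, hc1⟩, _, hc2⟩ := hj
    set a : ℤ := (i₁ : ℤ) - j * w with ha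
    set b : ℤ := (i₂ : ℤ) - j * w with hb
    have hr1 : 0 ≤ a % (ΔA : ℤ) := Int.emod_nonneg _ (ne_of_gt hD0)
    have hr2 : 0 ≤ b % (ΔA : ℤ) := Int.emod_nonneg _ (ne_of_gt hD0)
    have hlD : (ℓ : ℤ) ∣ (ΔA : ℤ) := ⟨(kA : ℤ), by rw [hΔ2]; push_cast; ring⟩
    have hl12 : (ℓ : ℤ) ∣ a - b := by
      have hml : (i₁ : ℤ) % ℓ = (i₂ : ℤ) % ℓ := by
        have := congrArg (Nat.cast : ℕ → ℤ) hmod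
        push_cast at this
        exact this
      have hd : (ℓ : ℤ) ∣ (i₁ : ℤ) - (i₂ : ℤ) := (key _ _ _).mpr hml
      have hab : a - b = (i₁ : ℤ) - (i₂ : ℤ) := by ring
      rwa [hab]
    have e1 : a % (ΔA : ℤ) % ℓ = a % ℓ := Int.emod_emod_of_dvd a hlD
    have e2 : b % (ΔA : ℤ) % ℓ = b % ℓ := Int.emod_emod_of_dvd b hlD
    have e3 : a % (ℓ : ℤ) = b % ℓ := (key _ _ _).mp hl12
    have hrd : (ℓ : ℤ) ∣ a % (ΔA : ℤ) - b % (ΔA : ℤ) :=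
      (key _ _ _).mpr (by rw [e1, e2, e3])
    have hr0 : a % (ΔA : ℤ) = b % (ΔA : ℤ) := by
      have hz := Int.eq_zero_of_abs_lt_dvd hrd (by
        rw [abs_lt]
        constructor <;> linarith)
      linarith
    have habD : (ΔA : ℤ) ∣ (i₁ : ℤ) - (i₂ : ℤ) := by
      have hd : (ΔA : ℤ) ∣ a - b := (key _ _ _).mpr hr0
      have hab : a - b = (i₁ : ℤ) - (i₂ : ℤ) := by ring
      rwa [hab] at hd
    have hz2 : (i₁ : ℤ) - (i₂ : ℤ) = 0 := by
      apply Int.eq_zero_of_abs_lt_dvd habD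
      rw [abs_lt]
      constructor <;> [omega; omega]
    exact hne (by omega)
  -- cardinality of each U i
  have hcard : ∀ i, (U i).card = kB := by
    intro i
    rw [hU i]
    obtain ⟨q, s, hqs, hslt⟩ : ∃ q s, i = q * w + s ∧ s < w :=
      ⟨i / w, i % w, by rw [Nat.div_add_mod'], Nat.mod_lt _ hw'⟩
    have hcong : ∀ j ∈ Finset.range n,
        (((i : ℤ) - (j : ℤ) * (w : ℤ)) % (ΔA : ℤ) < (p : ℤ)) ↔
          ((q + n - j) % n < kB) := by
      intro j hj
      rw [hΔ1, hp]
      push_cast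
      exact stmt11_cond_iff n w kB q s i j hn' hslt hqs (Finset.mem_range.mp hj)
    rw [Finset.filter_congr hcong]
    exact stmt11_card_filter n q kB hn' hkBn
  refine ⟨hdisj, ?_⟩
  intro m hm
  have hlt : ∀ t < kA, m + t * ℓ < ΔA := by
    intro t ht
    have h5 : (t + 1) * ℓ ≤ kA * ℓ := Nat.mul_le_mul_right _ (by omega)
    have h6 : (t + 1) * ℓ = t * ℓ + ℓ := by ring
    omega
  rw [Finset.card_biUnion]
  · rw [Finset.sum_congr rfl (fun t _ => hcard (m + t * ℓ))]
    simp [Finset.sum_const, Finset.card_range, Nat.mul_comm]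
  · intro t₁ ht₁ t₂ ht₂ hne
    rw [Function.onFun, Finset.disjoint_iff_inter_eq_empty]
    apply hdisj
    · exact hlt t₁ (Finset.mem_range.mp ht₁)
    · exact hlt t₂ (Finset.mem_range.mp ht₂)
    · intro hcontra
      apply hne
      have h7 : t₁ * ℓ = t₂ * ℓ := by omega
      exact Nat.eq_of_mul_eq_mul_right hl h7
    · rw [Nat.add_mul_mod_self_right, Nat.add_mul_mod_self_right]
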